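/- arXiv:2008.12911 — 2 statements merged into one kernel-verified Lean document; each statement's English description precedes it below -/
import Mathlib

section
/- Let s ∈ (0,1), α ∈ ℝ, m₁,…,m_k ∈ ℝ all nonzero, and let b = (b₁,…,b_k) ∈ (ℝ²)^k have pairwise distinct components. Then b is a critical point of J (i.e. the total derivative of J at b vanishes) if and only if for every j ∈ {1,…,k}: α b_j = -(Γ(2-s)/(2^{2s-3} π Γ(s))) Σ_{i≠j} m_i (b_i - b_j)/|b_i - b_j|^{4-2s}; that is, critical points of J correspond to solutions of the rotating point-vortex system. -/
open Real Finset RealInnerProductSpace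

noncomputable section

/-- The plane `ℝ²` with the Euclidean norm. -/
abbrev E2 := EuclideanSpace ℝ (Fin 2)

/-- For `a = (a₁, a₂)`, `perp a = a^⊥ = (a₂, -a₁)`. -/
def perp (a : E2) : E2 := WithLp.toLp 2 ![a 1, -(a 0)]

/-- `e₁ = (1,0)`. -/
def e1 : E2 := WithLp.toLp 2 ![1, 0]

/-- `e₂ = (0,1)`. -/
def e2 : E2 := WithLp.toLp 2 ![0, 1]

/-- `K_s = Γ(2-s) / (2^(2s-1) π Γ(s))`. -/
def Ks (s : ℝ) : ℝ := Real.Gamma (2 - s) / (2 ^ (2*s - 1) * Real.pi * Real.Gamma s)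

/-- Counterclockwise rotation of the plane by angle `θ`. -/
def rot (θ : ℝ) (a : E2) : E2 :=
  WithLp.toLp 2 ![Real.cos θ * a 0 - Real.sin θ * a 1, Real.sin θ * a 0 + Real.cos θ * a 1]

lemma aux_norm_rpow {E : Type*} [NormedAddCommGroup E] [InnerProductSpace ℝ E]
    (y : E) (hy : y ≠ 0) (p : ℝ) :
    HasFDerivAt (fun y : E => ‖y‖ ^ p) ((p * ‖y‖ ^ (p - 2)) • innerSL ℝ y) y := by
  have h0 : ‖y‖ ≠ 0 := norm_ne_zero_iff.mpr hy
  have h2 : ‖y‖ ^ 2 ≠ 0 := pow_ne_zero _ h0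
  have h := ((hasStrictFDerivAt_norm_sq y).hasFDerivAt).rpow_const (p := p/2) (Or.inl h2)
  have heq : (fun x : E => (‖x‖ ^ 2 : ℝ) ^ (p/2)) = fun x : E => ‖x‖ ^ p := by
    funext x
    rw [← Real.rpow_natCast ‖x‖ 2, ← Real.rpow_mul (norm_nonneg x)]
    norm_num
    congr 1
    ring
  rw [heq] at h
  convert h using 1
  have : ((‖y‖ ^ 2 : ℝ)) ^ (p/2 - 1) = ‖y‖ ^ (p - 2) := by
    rw [← Real.rpow_natCast ‖y‖ 2, ← Real.rpow_mul (norm_nonneg y)]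
    congr 1
    push_cast
    ring
  rw [this]
  ext v
  simp [smul_smul]
  ring

/-- for nonzero intensities, a configuration with pairwise distinct points is a
critical point of `J` iff it solves the rotating point-vortex system:
`α b_j = -(Γ(2-s)/(2^{2s-3} π Γ(s))) Σ_{i≠j} m_i (b_i - b_j)/|b_i - b_j|^{4-2s}` for all `j`. -/
theorem statement13 (s : ℝ) (hs : s ∈ Set.Ioo (0:ℝ) 1) (k : ℕ) (hk : 1 ≤ k) (α : ℝ)
    (m : Fin k → ℝ) (hm : ∀ i, m i ≠ 0) (b : Fin k → E2) (hb : Function.Injective b)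
    (J : (Fin k → E2) → ℝ)
    (hJ : ∀ x : Fin k → E2, J x = (α/2) * ∑ i, m i * ‖x i‖ ^ 2
        + (Real.Gamma (1-s) / (Real.pi * 2 ^ (2*s-1) * Real.Gamma s)) *
            ∑ i, ∑ j ∈ Finset.univ \ {i}, m i * m j * ‖x i - x j‖ ^ (-(2 - 2*s))) :
    fderiv ℝ J b = 0 ↔
      ∀ j : Fin k, α • b j
        = -((Real.Gamma (2-s) / (2 ^ (2*s-3) * Real.pi * Real.Gamma s)) •
            ∑ i ∈ Finset.univ \ {j}, (m i / ‖b i - b j‖ ^ (4 - 2*s)) • (b i - b j)) := by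
  set C : ℝ := Real.Gamma (1-s) / (Real.pi * 2 ^ (2*s-1) * Real.Gamma s) with hC
  set K : ℝ := Real.Gamma (2-s) / (2 ^ (2*s-3) * Real.pi * Real.Gamma s) with hK
  set q : ℝ := -(2 - 2*s) with hq
  -- the constant identity
  have hCK : 2 * C * q = -K := by
    have hG : Real.Gamma (2-s) = (1-s) * Real.Gamma (1-s) := by
      have h1 : (1:ℝ) - s ≠ 0 := by nlinarith [hs.2]
      have := Real.Gamma_add_one h1
      rw [show (1:ℝ) - s + 1 = 2 - s by ring] at this
      exact this
    have h2 : (2:ℝ) ^ (2*s-1) = 2 ^ (2*s-3) * 4 := by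
      rw [show 2*s-1 = (2*s-3) + 2 by ring, Real.rpow_add two_pos]
      norm_num
    have hpi : Real.pi ≠ 0 := Real.pi_ne_zero
    have hGs : Real.Gamma s ≠ 0 := (Real.Gamma_pos_of_pos hs.1).ne'
    have hp2 : (2:ℝ) ^ (2*s-3) ≠ 0 := (Real.rpow_pos_of_pos two_pos _).ne'
    rw [hC, hK, hq, hG, h2]
    field_simp
    ring
  -- nonvanishing differences
  have hne : ∀ i j : Fin k, i ≠ j → b i - b j ≠ 0 := fun i j h =>
    sub_ne_zero.mpr (fun e => h (hb e))
  classical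
  -- the derivative
  set P : Fin k → (Fin k → E2) →L[ℝ] E2 := fun i => ContinuousLinearMap.proj i with hP
  set L : (Fin k → E2) →L[ℝ] ℝ :=
    (α/2) • (∑ i, (m i) • ((2:ℕ) • ((innerSL ℝ (b i)).comp (P i)))) +
    C • (∑ i, ∑ j ∈ Finset.univ \ {i}, (m i * m j) •
      ((q * ‖b i - b j‖ ^ (q-2)) • ((innerSL ℝ (b i - b j)).comp (P i - P j)))) with hL
  have hder : HasFDerivAt J L b := by
    have hJfun : J = fun x : Fin k → E2 => (α/2) * ∑ i, m i * ‖x i‖ ^ 2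
        + C * ∑ i, ∑ j ∈ Finset.univ \ {i}, m i * m j * ‖x i - x j‖ ^ q := funext hJ
    rw [hJfun]
    apply HasFDerivAt.add
    · apply HasFDerivAt.const_mul
      apply HasFDerivAt.fun_sum
      intro i _
      exact ((P i).hasFDerivAt (x := b)).norm_sq.const_mul (m i)
    · apply HasFDerivAt.const_mul
      apply HasFDerivAt.fun_sum
      intro i _
      apply HasFDerivAt.fun_sum
      intro j hj
      have hij : i ≠ j := by
        simp [Finset.mem_sdiff] at hj
        exact fun e => hj e.symm
      have hsub : HasFDerivAt (fun x : Fin k → E2 => x i - x j) (P i - P j) b :=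
        ((P i).hasFDerivAt (x := b)).sub ((P j).hasFDerivAt (x := b))
      exact ((aux_norm_rpow (b i - b j) (hne i j hij) q).comp b hsub).const_mul (m i * m j)
  have hfd : fderiv ℝ J b = L := hder.fderiv
  -- the gradient at each site
  set G : Fin k → E2 := fun j => (α * m j) • b j +
    ∑ i ∈ Finset.univ \ {j}, (2 * C * q * (m j * m i) * ‖b j - b i‖ ^ (q-2)) • (b j - b i)
    with hG
  have hsingle : ∀ (j : Fin k) (w : E2), L ((Pi.single j w : Fin k → E2)) = ⟪G j, w⟫ := by
    intro j w
    simp only [hL, ContinuousLinearMap.add_apply, ContinuousLinearMap.smul_apply,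
      ContinuousLinearMap.sum_apply, ContinuousLinearMap.coe_smul', Pi.smul_apply,
      ContinuousLinearMap.comp_apply, ContinuousLinearMap.sub_apply,
      ContinuousLinearMap.proj_apply, innerSL_apply_apply, smul_eq_mul, nsmul_eq_mul, Nat.cast_ofNat, hP]
    have hS1 : ∑ x : Fin k, m x * ((2:ℝ) * ⟪b x, (Pi.single j w : Fin k → E2) x⟫) = m j * (2 * ⟪b j, w⟫) := by
      rw [Finset.sum_eq_single j]
      · simp
      · intro i _ hij
        rw [Pi.single_eq_of_ne hij, inner_zero_right]; ring
      · simp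
    have hA : ∑ i : Fin k, ∑ i' ∈ Finset.univ \ {i},
          m i * m i' * (q * ‖b i - b i'‖ ^ (q-2) * ⟪b i - b i', (Pi.single j w : Fin k → E2) i⟫)
        = ∑ i ∈ Finset.univ \ {j},
          m j * m i * (q * ‖b j - b i‖ ^ (q-2) * ⟪b j - b i, w⟫) := by
      rw [Finset.sum_eq_single j]
      · simp
      · intro i _ hij
        apply Finset.sum_eq_zero; intro i' _
        rw [Pi.single_eq_of_ne hij, inner_zero_right]; ring
      · simp
    have hB : ∑ i : Fin k, ∑ i' ∈ Finset.univ \ {i},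
          m i * m i' * (q * ‖b i - b i'‖ ^ (q-2) * ⟪b i - b i', (Pi.single j w : Fin k → E2) i'⟫)
        = ∑ i ∈ Finset.univ \ {j},
          m i * m j * (q * ‖b i - b j‖ ^ (q-2) * ⟪b i - b j, w⟫) := by
      rw [Finset.sum_eq_sum_sdiff_singleton_add (Finset.mem_univ j)]
      have hzero : (∑ i' ∈ Finset.univ \ {j},
          m j * m i' * (q * ‖b j - b i'‖ ^ (q-2) * ⟪b j - b i', (Pi.single j w : Fin k → E2) i'⟫)) = 0 := by
        apply Finset.sum_eq_zero; intro i' hi'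
        have hi'j : i' ≠ j := by simpa using (Finset.mem_sdiff.mp hi').2
        rw [Pi.single_eq_of_ne hi'j, inner_zero_right]; ring
      rw [hzero, add_zero]
      apply Finset.sum_congr rfl
      intro i hi
      have hij : i ≠ j := by simpa using (Finset.mem_sdiff.mp hi).2
      have hcoll := Finset.sum_eq_single_of_mem
        (f := fun i' => m i * m i' * (q * ‖b i - b i'‖ ^ (q-2) * ⟪b i - b i', (Pi.single j w : Fin k → E2) i'⟫))
        (a := j) (s := Finset.univ \ {i}) (by simp [Finset.mem_sdiff, Ne.symm hij])
        (fun i' _ hi'j => by simp only [Pi.single_eq_of_ne hi'j, inner_zero_right]; ring)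
      rw [hcoll]
      simp only [Pi.single_eq_same]
    have hsplit : ∀ i i' : Fin k,
        m i * m i' * (q * ‖b i - b i'‖ ^ (q-2) * ⟪b i - b i', (Pi.single j w : Fin k → E2) i - (Pi.single j w : Fin k → E2) i'⟫)
        = m i * m i' * (q * ‖b i - b i'‖ ^ (q-2) * ⟪b i - b i', (Pi.single j w : Fin k → E2) i⟫)
          - m i * m i' * (q * ‖b i - b i'‖ ^ (q-2) * ⟪b i - b i', (Pi.single j w : Fin k → E2) i'⟫) := by
      intro i i'
      rw [inner_sub_right]; ring
    simp only [hsplit, Finset.sum_sub_distrib]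
    rw [hS1, hA, hB, ← Finset.sum_sub_distrib]
    have hsum : ∀ i ∈ Finset.univ \ {j},
        m j * m i * (q * ‖b j - b i‖ ^ (q-2) * ⟪b j - b i, w⟫)
          - m i * m j * (q * ‖b i - b j‖ ^ (q-2) * ⟪b i - b j, w⟫)
        = 2 * (m j * m i * (q * ‖b j - b i‖ ^ (q-2) * ⟪b j - b i, w⟫)) := by
      intro i _
      rw [norm_sub_rev (b i) (b j), ← neg_sub (b j) (b i), inner_neg_left]
      ring
    rw [Finset.sum_congr rfl hsum, hG]
    simp only [inner_add_left, real_inner_smul_left, sum_inner, Finset.mul_sum]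
    have hterm : ∀ i ∈ Finset.univ \ {j},
        C * (2 * (m j * m i * (q * ‖b j - b i‖ ^ (q-2) * ⟪b j - b i, w⟫)))
          = 2 * C * q * (m j * m i) * ‖b j - b i‖ ^ (q-2) * ⟪b j - b i, w⟫ := by
      intro i _; ring
    rw [Finset.sum_congr rfl hterm]
    ring
  -- rewrite the sum in G j
  have hsum_eq : ∀ j : Fin k,
      (∑ i ∈ Finset.univ \ {j}, (2*C*q*(m j*m i)*‖b j - b i‖ ^ (q-2)) • (b j - b i))
      = m j • (K • ∑ i ∈ Finset.univ \ {j}, (m i / ‖b i - b j‖ ^ (4-2*s)) • (b i - b j)) := by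
    intro j
    rw [Finset.smul_sum, Finset.smul_sum]
    apply Finset.sum_congr rfl
    intro i hi
    have hd : ‖b j - b i‖ ^ (q-2) = (‖b i - b j‖ ^ (4-2*s))⁻¹ := by
      rw [norm_sub_rev, show q - 2 = -(4-2*s) by rw [hq]; ring,
        Real.rpow_neg (norm_nonneg _)]
    rw [hd, smul_smul, smul_smul, ← neg_sub (b i) (b j), smul_neg, ← neg_smul]
    congr 1
    have hdiv : m i / ‖b i - b j‖ ^ (4-2*s) = m i * (‖b i - b j‖ ^ (4-2*s))⁻¹ :=
      div_eq_mul_inv _ _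
    rw [hdiv]
    linear_combination (-(m j * m i) * (‖b i - b j‖ ^ (4-2*s))⁻¹) * hCK
  have hGeq : ∀ j : Fin k, (G j = 0 ↔ α • b j
      = -(K • ∑ i ∈ Finset.univ \ {j}, (m i / ‖b i - b j‖ ^ (4-2*s)) • (b i - b j))) := by
    intro j
    rw [hG]
    simp only []
    rw [hsum_eq j, show (α * m j) • b j = m j • (α • b j) by rw [smul_smul, mul_comm],
      ← smul_add, smul_eq_zero]
    simp only [hm j, false_or]
    exact add_eq_zero_iff_eq_neg
  rw [hfd]
  constructor
  · intro h0 j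
    refine (hGeq j).mp ?_
    have h1 := hsingle j (G j)
    rw [h0] at h1
    simp only [ContinuousLinearMap.zero_apply] at h1
    exact (inner_self_eq_zero (𝕜 := ℝ)).mp h1.symm
  · intro heq
    ext v
    have hv : v = ∑ j, (Pi.single j (v j) : Fin k → E2) := (Finset.univ_sum_single v).symm
    rw [ContinuousLinearMap.zero_apply, hv, map_sum]
    refine Finset.sum_eq_zero fun j _ => ?_
    rw [hsingle j (v j), (hGeq j).mpr (heq j), inner_zero_left]
end
end

section
/- Let s ∈ (0,1), α ∈ ℝ, m₁,…,m_k ∈ ℝ, and let b = (b₁,…,b_k) ∈ (ℝ²)^k have pairwise distinct components and be a critical point of J (the total derivative of J at b vanishes). Let v = (b₁^⊥, b₂^⊥, …, b_k^⊥) ∈ (ℝ²)^k. Then the second derivative of J at b annihilates v, i.e. D²J(b)[v, w] = 0 for every w ∈ (ℝ²)^k. In particular, if not all b_j are zero, every critical point of J is degenerate (the Hessian of J has nontrivial kernel). -/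
open Real Finset RealInnerProductSpace

noncomputable section

/-! ### Auxiliary material for statement17 -/

/-- `perp` as a continuous linear map. -/
def perpL : E2 →L[ℝ] E2 :=
  LinearMap.toContinuousLinearMap
    { toFun := perp
      map_add' := by
        intro a b; ext i; fin_cases i <;> simp [perp] <;> ring
      map_smul' := by
        intro c a; ext i; fin_cases i <;> simp [perp] <;> ring }

lemma perpL_apply (a : E2) : perpL a = perp a := rfl

lemma perp_sub (a b : E2) : perp a - perp b = perp (a - b) := by
  rw [← perpL_apply, ← perpL_apply, ← perpL_apply, ← map_sub]

lemma inner_perp (a : E2) : ⟪a, perp a⟫ = 0 := by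
  simp [PiLp.inner_apply, Fin.sum_univ_two, perp]
  ring

lemma exists_fderiv_sum {X : Type*} [NormedAddCommGroup X] [NormedSpace ℝ X]
    {ι : Type*} (s : Finset ι) (f : ι → X → ℝ) (x V : X)
    (h : ∀ j ∈ s, ∃ L : X →L[ℝ] ℝ, HasFDerivAt (f j) L x ∧ L V = 0) :
    ∃ L : X →L[ℝ] ℝ, HasFDerivAt (fun y => ∑ j ∈ s, f j y) L x ∧ L V = 0 := by
  choose L hL h0 using h
  have heq : (fun y => ∑ j ∈ s, f j y) = fun y => ∑ j ∈ s.attach, f j.1 y := by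
    funext y; exact (Finset.sum_attach s fun j => f j y).symm
  rw [heq]
  exact ⟨_, HasFDerivAt.fun_sum (fun j _ => hL j.1 j.2),
    by simp [ContinuousLinearMap.sum_apply, h0]⟩

lemma key_deriv_zero {k : ℕ} (p c α : ℝ) (m : Fin k → ℝ) (x : Fin k → E2)
    (hx : ∀ i j : Fin k, i ≠ j → x i ≠ x j) :
    fderiv ℝ (fun y : Fin k → E2 => (α/2) * ∑ i, m i * ‖y i‖ ^ 2
        + c * ∑ i, ∑ j ∈ Finset.univ \ {i}, m i * m j * (‖y i - y j‖^2) ^ (p/2)) x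
      (fun i => perp (x i)) = 0 := by
  set V : Fin k → E2 := fun i => perp (x i) with hVdef
  have hne : ∀ i j : Fin k, i ≠ j → ‖x i - x j‖^2 ≠ 0 := by
    intro i j hij
    exact pow_ne_zero 2 (norm_ne_zero_iff.mpr (sub_ne_zero_of_ne (hx i j hij)))
  have hVinner : ∀ i j : Fin k, ⟪x i - x j, V i - V j⟫ = 0 := by
    intro i j
    rw [hVdef]
    simp only []
    rw [perp_sub]
    exact inner_perp _
  have h1 : ∃ L : (Fin k → E2) →L[ℝ] ℝ,
      HasFDerivAt (fun y : Fin k → E2 => (α/2) * ∑ i, m i * ‖y i‖ ^ 2) L x ∧ L V = 0 := by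
    have hsum : ∃ L : (Fin k → E2) →L[ℝ] ℝ,
        HasFDerivAt (fun y : Fin k → E2 => ∑ i, m i * ‖y i‖ ^ 2) L x ∧ L V = 0 := by
      refine exists_fderiv_sum _ _ _ _ (fun i _ => ?_)
      refine ⟨_, ((hasFDerivAt_apply i x).norm_sq).const_mul (m i), ?_⟩
      have h0 : ⟪x i, V i⟫ = 0 := inner_perp (x i)
      simp only [ContinuousLinearMap.smul_apply, ContinuousLinearMap.comp_apply,
        ContinuousLinearMap.proj_apply, innerSL_apply_apply, h0]
      simp
    obtain ⟨L, hL, h0⟩ := hsum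
    exact ⟨_, hL.const_mul (α/2), by simp [h0]⟩
  have h2 : ∃ L : (Fin k → E2) →L[ℝ] ℝ,
      HasFDerivAt (fun y : Fin k → E2 =>
        c * ∑ i, ∑ j ∈ Finset.univ \ {i}, m i * m j * (‖y i - y j‖^2) ^ (p/2)) L x ∧ L V = 0 := by
    have hsum : ∃ L : (Fin k → E2) →L[ℝ] ℝ,
        HasFDerivAt (fun y : Fin k → E2 =>
          ∑ i, ∑ j ∈ Finset.univ \ {i}, m i * m j * (‖y i - y j‖^2) ^ (p/2)) L x ∧ L V = 0 := by
      refine exists_fderiv_sum _ _ _ _ (fun i _ => ?_)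
      refine exists_fderiv_sum _ _ _ _ (fun j hj => ?_)
      have hij : i ≠ j := by
        simp [Finset.mem_sdiff] at hj; exact fun h => hj h.symm
      have hsq : HasFDerivAt (fun y : Fin k → E2 => ‖y i - y j‖^2)
          (2 • (innerSL ℝ (x i - x j)).comp
            (ContinuousLinearMap.proj (R := ℝ) (φ := fun _ : Fin k => E2) i
              - ContinuousLinearMap.proj j)) x :=
        ((hasFDerivAt_apply i x).sub (hasFDerivAt_apply j x)).norm_sq
      refine ⟨_, (hsq.rpow_const (Or.inl (hne i j hij))).const_mul (m i * m j), ?_⟩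
      simp only [ContinuousLinearMap.smul_apply, ContinuousLinearMap.comp_apply,
        ContinuousLinearMap.proj_apply, ContinuousLinearMap.sub_apply, innerSL_apply_apply,
        hVinner i j]
      simp
    obtain ⟨L, hL, h0⟩ := hsum
    exact ⟨_, hL.const_mul c, by simp [h0]⟩
  obtain ⟨L1, hL1, h01⟩ := h1
  obtain ⟨L2, hL2, h02⟩ := h2
  rw [(hL1.fun_add hL2).fderiv]
  simp [h01, h02]

lemma key_contDiffAt {k : ℕ} (p c α : ℝ) (m : Fin k → ℝ) (x : Fin k → E2)
    (hx : ∀ i j : Fin k, i ≠ j → x i ≠ x j) :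
    ContDiffAt ℝ 2 (fun y : Fin k → E2 => (α/2) * ∑ i, m i * ‖y i‖ ^ 2
        + c * ∑ i, ∑ j ∈ Finset.univ \ {i}, m i * m j * (‖y i - y j‖^2) ^ (p/2)) x := by
  have happ : ∀ i : Fin k, ContDiffAt ℝ 2 (fun y : Fin k → E2 => y i) x :=
    fun i => (contDiff_apply ℝ E2 i).contDiffAt
  refine ContDiffAt.add ?_ ?_
  · refine contDiffAt_const.mul (ContDiffAt.sum fun i _ => contDiffAt_const.mul ?_)
    exact (happ i).norm_sq ℝ
  · refine contDiffAt_const.mul (ContDiffAt.sum fun i _ => ContDiffAt.sum fun j hj => ?_)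
    have hij : i ≠ j := by
      simp [Finset.mem_sdiff] at hj; exact fun h => hj h.symm
    have hne : ‖x i - x j‖^2 ≠ 0 :=
      pow_ne_zero 2 (norm_ne_zero_iff.mpr (sub_ne_zero_of_ne (hx i j hij)))
    refine contDiffAt_const.mul ?_
    exact (((happ i).sub (happ j)).norm_sq ℝ).rpow_const_of_ne hne

lemma norm_rpow_eq (y : E2) (t : ℝ) : ‖y‖ ^ t = (‖y‖^2) ^ (t/2) := by
  conv_rhs => rw [← Real.rpow_natCast ‖y‖ 2]
  rw [← Real.rpow_mul (norm_nonneg y)]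
  congr 1
  push_cast
  ring

/-- at a critical point `b` of `J` with pairwise distinct components, the second
derivative of `J` annihilates the direction `v = (b₁^⊥, …, b_k^⊥)`: `D²J(b)[v, w] = 0` for
every `w`. In particular, if not all `b_j` vanish, the critical point is degenerate. -/
theorem statement17 (s : ℝ) (hs : s ∈ Set.Ioo (0:ℝ) 1) (k : ℕ) (hk : 1 ≤ k) (α : ℝ)
    (m : Fin k → ℝ) (b : Fin k → E2) (hb : Function.Injective b)
    (J : (Fin k → E2) → ℝ)
    (hJ : ∀ x : Fin k → E2, J x = (α/2) * ∑ i, m i * ‖x i‖ ^ 2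
        + (Real.Gamma (1-s) / (Real.pi * 2 ^ (2*s-1) * Real.Gamma s)) *
            ∑ i, ∑ j ∈ Finset.univ \ {i}, m i * m j * ‖x i - x j‖ ^ (-(2 - 2*s)))
    (hcrit : fderiv ℝ J b = 0)
    (v : Fin k → E2) (hv : v = fun i => perp (b i)) :
    ∀ w : Fin k → E2, fderiv ℝ (fderiv ℝ J) b v w = 0 := by
  intro w
  set p : ℝ := -(2 - 2*s) with hp
  set c : ℝ := Real.Gamma (1-s) / (Real.pi * 2 ^ (2*s-1) * Real.Gamma s) with hc
  have hJg : J = fun y : Fin k → E2 => (α/2) * ∑ i, m i * ‖y i‖ ^ 2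
      + c * ∑ i, ∑ j ∈ Finset.univ \ {i}, m i * m j * (‖y i - y j‖^2) ^ (p/2) := by
    funext y
    rw [hJ y]
    congr 1
    congr 1
    refine Finset.sum_congr rfl fun i _ => Finset.sum_congr rfl fun j _ => ?_
    rw [norm_rpow_eq]
  have hb' : ∀ i j : Fin k, i ≠ j → b i ≠ b j := fun i j hij heq => hij (hb heq)
  -- eventually pairwise distinct
  have hU : ∀ᶠ x in nhds b, ∀ i j : Fin k, i ≠ j → x i ≠ x j := by
    rw [Filter.eventually_all]
    intro i
    rw [Filter.eventually_all]
    intro j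
    by_cases hij : i = j
    · filter_upwards with x h; exact absurd hij h
    · have hct : ContinuousAt (fun x : Fin k → E2 => x i - x j) b :=
        ((continuous_apply i).sub (continuous_apply j)).continuousAt
      have hev : ∀ᶠ x in nhds b, x i - x j ≠ 0 :=
        hct.eventually_ne (sub_ne_zero_of_ne (hb' i j hij))
      filter_upwards [hev] with x hxx _
      exact sub_ne_zero.mp hxx
  have hsm : ∀ᶠ x in nhds b, ContDiffAt ℝ 2 J x :=
    hU.mono fun x hx => hJg ▸ key_contDiffAt p c α m x hx
  have hdiffJ : ∀ᶠ y in nhds b, HasFDerivAt J (fderiv ℝ J y) y :=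
    hsm.mono fun y hy => (hy.differentiableAt (by norm_num)).hasFDerivAt
  have hC2 : ContDiffAt ℝ 2 J b := by
    rw [hJg]; exact key_contDiffAt p c α m b hb'
  have hC1' : ContDiffAt ℝ 1 (fderiv ℝ J) b := hC2.fderiv_right (by norm_num)
  have hd2 : DifferentiableAt ℝ (fderiv ℝ J) b := hC1'.differentiableAt (by norm_num)
  set f'' := fderiv ℝ (fderiv ℝ J) b with hf''
  have hx2 : HasFDerivAt (fderiv ℝ J) f'' b := hd2.hasFDerivAt
  -- the linear vector field x ↦ (perp (x i))_i
  set VL : (Fin k → E2) →L[ℝ] (Fin k → E2) :=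
    ContinuousLinearMap.pi (fun i => perpL.comp (ContinuousLinearMap.proj i)) with hVL
  have hVder : HasFDerivAt (fun x : Fin k → E2 => (fun i => perp (x i))) VL b := by
    apply hasFDerivAt_pi''
    intro i
    have h1 : HasFDerivAt (fun x : Fin k → E2 => perp (x i))
        (perpL.comp (ContinuousLinearMap.proj i)) b :=
      perpL.hasFDerivAt.comp b (hasFDerivAt_apply i b)
    exact h1
  have hHD : HasFDerivAt (fun x => fderiv ℝ J x (fun i => perp (x i)))
      ((fderiv ℝ J b).comp VL + f''.flip (fun i => perp (b i))) b :=
    hx2.clm_apply hVder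
  have h0ev : (fun x => fderiv ℝ J x (fun i => perp (x i))) =ᶠ[nhds b] (fun _ => 0) := by
    refine hU.mono fun x hx => ?_
    rw [hJg]
    exact key_deriv_zero p c α m x hx
  have hzero : fderiv ℝ (fun x => fderiv ℝ J x (fun i => perp (x i))) b = 0 := by
    rw [h0ev.fderiv_eq]
    exact fderiv_const_apply 0
  have hcombo : ((fderiv ℝ J b).comp VL + f''.flip (fun i => perp (b i))) = 0 := by
    rw [← hHD.fderiv]
    exact hzero
  have hWV : f'' w (fun i => perp (b i)) = 0 := by
    have := congrArg (fun (L : (Fin k → E2) →L[ℝ] ℝ) => L w) hcombo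
    simp only [ContinuousLinearMap.add_apply, ContinuousLinearMap.comp_apply,
      ContinuousLinearMap.flip_apply, ContinuousLinearMap.zero_apply, hcrit] at this
    simpa using this
  have hsym := second_derivative_symmetric_of_eventually hdiffJ hx2 v w
  rw [hsym, hv]
  exact hWV
end
end
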